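/- Bailey pair inversion: if β_L = Σ_{r=0}^L α_r / ((q;q)_{L-r} (aq;q)_{L+r}) for all L, then α_L = ((1 - a q^{2L})/(1 - a)) Σ_{r=0}^L (-1)^{L-r} q^{(L-r)(L-r-1)/2} (a;q)_{L+r} β_r / (q;q)_{L-r}. -/

import Mathlib

open Finset Polynomial

/-- Finite q-shifted factorial `(x;q)_n`. -/
noncomputable def qp (q x : ℂ) (n : ℕ) : ℂ := ∏ k ∈ Finset.range n, (1 - x * q ^ k)

lemma qp_zero (q x : ℂ) : qp q x 0 = 1 := by simp [qp]

lemma qp_succ (q x : ℂ) (n : ℕ) : qp q x (n+1) = qp q x n * (1 - x * q ^ n) :=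
  Finset.prod_range_succ _ _

lemma qp_succ' (q x : ℂ) (n : ℕ) : qp q x (n+1) = (1 - x) * qp q (x*q) n := by
  rw [qp, Finset.prod_range_succ']
  simp only [pow_zero, mul_one]
  rw [mul_comm]
  congr 1
  apply Finset.prod_congr rfl
  intro k _
  rw [pow_succ]
  ring

lemma qp_add (q x : ℂ) (m t : ℕ) : qp q x (m+t) = qp q x m * qp q (x * q^m) t := by
  rw [qp, Finset.prod_range_add]
  congr 1
  apply Finset.prod_congr rfl
  intro k _
  rw [pow_add]
  ring

lemma key_rel (q x : ℂ) (m : ℕ) : qp q x m * (1 - x * q^m) = (1 - x) * qp q (x*q) m := by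
  rw [← qp_succ, qp_succ']

lemma qpq_ne (q : ℂ) (hq : ∀ n : ℕ, 0 < n → q ^ n ≠ 1) (n : ℕ) : qp q q n ≠ 0 := by
  rw [qp]
  apply Finset.prod_ne_zero_iff.mpr
  intro k _
  have h : q * q ^ k = q ^ (k+1) := by ring
  rw [h]
  exact sub_ne_zero.mpr (Ne.symm (hq (k+1) k.succ_pos))

noncomputable def cc (q : ℂ) (n j : ℕ) : ℂ :=
  if j ≤ n then
    (-1)^(n-j) * q^((n-j)*((n-j)-1)/2) * qp q q n / (qp q q (n-j) * qp q q j)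
  else 0

lemma tri_succ (d : ℕ) : (d+1)*d/2 = d*(d-1)/2 + d := by
  have h1 := Nat.choose_two_right (d+1)
  have h2 := Nat.choose_two_right d
  have h3 : (d+1).choose 2 = d.choose 1 + d.choose 2 := Nat.choose_succ_succ d 1
  simp [Nat.choose_one_right] at h3
  simp at h1
  omega

lemma cc_pascal (q : ℂ) (hq : ∀ n : ℕ, 0 < n → q ^ n ≠ 1) (n j : ℕ) :
    cc q (n+1) (j+1) = cc q n j - q^n * cc q n (j+1) := by
  rcases le_or_gt (j+1) n with h | h
  · obtain ⟨d, hd⟩ := Nat.exists_eq_add_of_le h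
    subst hd
    have e1 : j + 1 + d - j = d + 1 := by omega
    have e2 : j + 1 + d - (j+1) = d := by omega
    have e3 : j + 1 + d + 1 - (j+1) = d + 1 := by omega
    rw [cc, cc, cc, if_pos (by omega), if_pos (by omega), if_pos (by omega), e1, e2, e3]
    have hQn1 : qp q q (j+1+d+1) = qp q q (j+1+d) * (1 - q^(j+1+d+1)) := by
      rw [qp_succ]; ring_nf
    have hQd1 : qp q q (d+1) = qp q q d * (1 - q^(d+1)) := by
      rw [qp_succ]; ring_nf
    have hQj1 : qp q q (j+1) = qp q q j * (1 - q^(j+1)) := by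
      rw [qp_succ]; ring_nf
    have htri : (d+1)*((d+1)-1)/2 = d*(d-1)/2 + d := by
      simpa using tri_succ d
    rw [hQn1, hQd1, hQj1, htri]
    have h1 : qp q q (j+1+d) ≠ 0 := qpq_ne q hq _
    have h2 : qp q q d ≠ 0 := qpq_ne q hq _
    have h3 : qp q q j ≠ 0 := qpq_ne q hq _
    have h4 : (1 : ℂ) - q^(d+1) ≠ 0 := sub_ne_zero.mpr (Ne.symm (hq (d+1) (by omega)))
    have h5 : (1 : ℂ) - q^(j+1) ≠ 0 := sub_ne_zero.mpr (Ne.symm (hq (j+1) (by omega)))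
    field_simp
    ring
  · rcases eq_or_lt_of_le (Nat.lt_iff_add_one_le.mp h) with h' | h'
    · have hj : j = n := by omega
      subst hj
      rw [cc, cc, cc, if_pos le_rfl, if_pos le_rfl, if_neg (by omega)]
      simp only [Nat.sub_self, pow_zero, one_mul, Nat.zero_mul]
      have h1 : qp q q (j+1) ≠ 0 := qpq_ne q hq _
      have h2 : qp q q j ≠ 0 := qpq_ne q hq _
      rw [qp_zero]
      field_simp
      simp
    · rw [cc, cc, cc, if_neg (by omega), if_neg (by omega), if_neg (by omega)]
      ring

lemma cc_zero_succ (q : ℂ) (hq : ∀ n : ℕ, 0 < n → q ^ n ≠ 1) (n : ℕ) :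
    cc q (n+1) 0 = -(q^n * cc q n 0) := by
  rw [cc, cc, if_pos (Nat.zero_le _), if_pos (Nat.zero_le _)]
  simp only [Nat.sub_zero]
  have h1 : qp q q (n+1) ≠ 0 := qpq_ne q hq _
  have h2 : qp q q n ≠ 0 := qpq_ne q hq _
  have htri : (n+1)*((n+1)-1)/2 = n*(n-1)/2 + n := by simpa using tri_succ n
  rw [qp_zero, htri, pow_add, pow_succ]
  field_simp
  ring_nf

lemma cc_top (q : ℂ) (n : ℕ) : cc q n (n+1) = 0 := by
  rw [cc, if_neg (by omega)]

lemma sumA (q : ℂ) (hq : ∀ n : ℕ, 0 < n → q ^ n ≠ 1) (n : ℕ) (x : ℂ) :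
    ∑ j ∈ range (n+1), cc q n j * x^j = ∏ k ∈ range n, (x - q^k) := by
  induction n with
  | zero => simp [cc, qp_zero]
  | succ n ih =>
    rw [Finset.prod_range_succ, ← ih]
    rw [Finset.sum_range_succ' (fun j => cc q (n+1) j * x^j) (n+1)]
    simp only [pow_zero, mul_one]
    have step : ∀ j, cc q (n+1) (j+1) * x^(j+1)
        = cc q n j * x^(j+1) - q^n * (cc q n (j+1) * x^(j+1)) := by
      intro j
      rw [cc_pascal q hq]
      ring
    rw [Finset.sum_congr rfl (fun j _ => step j), Finset.sum_sub_distrib, cc_zero_succ q hq]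
    have hshift : ∑ j ∈ range (n+1), cc q n (j+1) * x^(j+1)
        = (∑ j ∈ range (n+1), cc q n j * x^j) + cc q n (n+1) * x^(n+1) - cc q n 0 := by
      rw [← Finset.sum_range_succ (fun j => cc q n j * x^j) (n+1),
        Finset.sum_range_succ' (fun j => cc q n j * x^j) (n+1)]
      simp
    rw [← Finset.mul_sum, hshift, cc_top q]
    have hx : ∑ j ∈ range (n+1), cc q n j * x^(j+1)
        = (∑ j ∈ range (n+1), cc q n j * x^j) * x := by
      rw [Finset.sum_mul]
      apply Finset.sum_congr rfl
      intro j _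
      rw [pow_succ]; ring
    rw [hx]
    ring

lemma sumB (q : ℂ) (hq : ∀ n : ℕ, 0 < n → q ^ n ≠ 1) {n m : ℕ} (hm : m < n) :
    ∑ j ∈ range (n+1), cc q n j * (q^m)^j = 0 := by
  rw [sumA q hq]
  exact Finset.prod_eq_zero (Finset.mem_range.mpr hm) (sub_self _)

lemma sumC (q : ℂ) (hq : ∀ n : ℕ, 0 < n → q ^ n ≠ 1) {n : ℕ} (hn : 0 < n) (b : ℂ) :
    ∑ j ∈ range (n+1), cc q n j * qp q (b * q^j) (n-1) = 0 := by
  set P : Polynomial ℂ := ∏ k ∈ range (n-1), (1 - Polynomial.C (b * q^k) * Polynomial.X) with hP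
  have hdeg : P.natDegree < n := by
    have h0 : P.natDegree ≤ ∑ k ∈ range (n-1), (1 - Polynomial.C (b * q^k) * Polynomial.X).natDegree :=
      Polynomial.natDegree_prod_le _ _
    have h1 : ∀ k, (1 - Polynomial.C (b * q^k) * Polynomial.X).natDegree ≤ 1 := by
      intro k
      refine le_trans (Polynomial.natDegree_sub_le _ _) ?_
      rw [max_le_iff]
      exact ⟨by simp, le_trans (Polynomial.natDegree_C_mul_le _ _) (by simp)⟩
    have h2 : ∑ k ∈ range (n-1), (1 - Polynomial.C (b * q^k) * Polynomial.X).natDegree ≤ n - 1 := by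
      have := Finset.sum_le_sum (s := range (n-1)) (g := fun _ => 1) (fun k _ => h1 k)
      simpa using this
    omega
  have heval : ∀ j : ℕ, qp q (b * q^j) (n-1) = P.eval (q^j) := by
    intro j
    rw [hP, Polynomial.eval_prod, qp]
    apply Finset.prod_congr rfl
    intro k _
    simp only [Polynomial.eval_sub, Polynomial.eval_one, Polynomial.eval_mul, Polynomial.eval_C,
      Polynomial.eval_X]
    ring
  have hexp : ∀ j : ℕ, P.eval ((q:ℂ)^j) = ∑ m ∈ range n, P.coeff m * (q^j)^m := by
    intro j
    exact Polynomial.eval_eq_sum_range' hdeg _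
  calc ∑ j ∈ range (n+1), cc q n j * qp q (b * q^j) (n-1)
      = ∑ j ∈ range (n+1), ∑ m ∈ range n, P.coeff m * (cc q n j * (q^m)^j) := by
        apply Finset.sum_congr rfl
        intro j _
        rw [heval, hexp, Finset.mul_sum]
        apply Finset.sum_congr rfl
        intro m _
        rw [← pow_mul, ← pow_mul, Nat.mul_comm]
        ring
    _ = ∑ m ∈ range n, P.coeff m * ∑ j ∈ range (n+1), cc q n j * (q^m)^j := by
        rw [Finset.sum_comm]
        simp [Finset.mul_sum]
    _ = 0 := by
        apply Finset.sum_eq_zero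
        intro m hm
        rw [sumB q hq (Finset.mem_range.mp hm), mul_zero]

lemma orth (q a : ℂ) (hq : ∀ n : ℕ, 0 < n → q ^ n ≠ 1)
    (haq : ∀ n, qp q (a * q) n ≠ 0) (h1a : (1:ℂ) - a ≠ 0)
    (L s : ℕ) (hs : s ≤ L) (haL : (1:ℂ) - a * q^(2*L) ≠ 0) :
    ∑ r ∈ range (L+1), (if s ≤ r then
        (-1)^(L-r) * q^((L-r)*((L-r)-1)/2) * qp q a (L+r) /
          (qp q q (L-r) * (qp q q (r-s) * qp q (a*q) (r+s)))
      else 0)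
    = if s = L then (1-a)/(1 - a*q^(2*L)) else 0 := by
  obtain ⟨n, hn⟩ : ∃ n, L = s + n := ⟨L - s, by omega⟩
  subst hn
  have hrange : s + n + 1 = s + (n+1) := by omega
  rw [hrange, Finset.sum_range_add]
  have hzero : ∑ r ∈ range s, (if s ≤ r then
        (-1)^(s+n-r) * q^((s+n-r)*((s+n-r)-1)/2) * qp q a (s+n+r) /
          (qp q q (s+n-r) * (qp q q (r-s) * qp q (a*q) (r+s)))
      else 0) = 0 := by
    apply Finset.sum_eq_zero
    intro r hr
    rw [if_neg (by simp at hr; omega)]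
  rw [hzero, zero_add]
  rcases Nat.eq_zero_or_pos n with h0 | hpos
  · subst h0
    simp only [Nat.add_zero] at haL ⊢
    rw [if_pos trivial, Finset.sum_range_one, if_pos (by omega : s ≤ s + 0)]
    have e2 : s + s = 2*s := by omega
    simp only [Nat.add_zero, Nat.sub_self, Nat.zero_mul, Nat.zero_div, pow_zero, one_mul, qp_zero, e2]
    rw [div_eq_div_iff (haq (2*s)) haL]
    exact key_rel q a (2*s)
  · rw [if_neg (by omega)]
    have hterm : ∀ j ∈ range (n+1),
        (if s ≤ s + j then
          (-1)^(s+n-(s+j)) * q^((s+n-(s+j))*((s+n-(s+j))-1)/2) * qp q a (s+n+(s+j)) /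
            (qp q q (s+n-(s+j)) * (qp q q (s+j-s) * qp q (a*q) (s+j+s)))
        else 0)
        = ((1-a)/qp q q n) * (cc q n j * qp q ((a*q^(2*s+1)) * q^j) (n-1)) := by
      intro j hj
      have hjn : j ≤ n := by simpa [Nat.lt_succ_iff] using hj
      rw [if_pos (by omega)]
      have e1 : s + n - (s + j) = n - j := by omega
      have e2 : s + j - s = j := by omega
      have e3 : s + n + (s + j) = 2*s + j + (n-1) + 1 := by omega
      have e4 : s + j + s = 2*s + j := by omega
      rw [e1, e2, e3, e4]
      rw [qp_succ', qp_add]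
      have e5 : a * q * q ^ (2*s+j) = a * q^(2*s+1) * q^j := by ring
      rw [e5]
      rw [cc, if_pos hjn]
      have h1 : qp q q n ≠ 0 := qpq_ne q hq _
      have h2 : qp q q (n-j) ≠ 0 := qpq_ne q hq _
      have h3 : qp q q j ≠ 0 := qpq_ne q hq _
      have h4 : qp q (a*q) (2*s+j) ≠ 0 := haq _
      field_simp
    rw [Finset.sum_congr rfl hterm, ← Finset.mul_sum, sumC q hq hpos, mul_zero]

/-- inversion of the Bailey pair relation. -/
theorem bailey_pair_inversion (q a : ℂ) (hq : ∀ n : ℕ, 0 < n → q ^ n ≠ 1) (ha : a ≠ 1)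
    (haq : ∀ n, qp q (a * q) n ≠ 0) (α β : ℕ → ℂ)
    (hBP : ∀ L, β L = ∑ r ∈ Finset.range (L + 1),
      α r / (qp q q (L - r) * qp q (a * q) (L + r))) :
    ∀ L, α L = (1 - a * q ^ (2 * L)) / (1 - a) *
      ∑ r ∈ Finset.range (L + 1),
        (-1) ^ (L - r) * q ^ ((L - r) * (L - r - 1) / 2) * qp q a (L + r) * β r /
          qp q q (L - r) := by
  intro L
  have h1a : (1:ℂ) - a ≠ 0 := sub_ne_zero.mpr (Ne.symm ha)
  have hfac : ∀ k : ℕ, (1:ℂ) - a * q^(k+1) ≠ 0 := by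
    intro k
    have h := haq (k+1)
    rw [qp] at h
    have h2 := Finset.prod_ne_zero_iff.mp h k (Finset.mem_range.mpr (Nat.lt_succ_self k))
    have e : a * q^(k+1) = a * q * q^k := by ring
    rw [e]
    exact h2
  have haL : (1:ℂ) - a * q^(2*L) ≠ 0 := by
    cases L with
    | zero => simpa using h1a
    | succ m =>
      have h := hfac (2*m+1)
      have e : 2*(m+1) = 2*m+1+1 := by ring
      rw [e]
      exact h
  set T : ℕ → ℕ → ℂ := fun r s =>
    (-1)^(L-r) * q^((L-r)*((L-r)-1)/2) * qp q a (L+r) /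
      (qp q q (L-r) * (qp q q (r-s) * qp q (a*q) (r+s))) with hT
  have main : (∑ r ∈ Finset.range (L + 1),
      (-1) ^ (L - r) * q ^ ((L - r) * (L - r - 1) / 2) * qp q a (L + r) * β r /
        qp q q (L - r))
      = α L * ((1-a)/(1 - a*q^(2*L))) := by
    calc ∑ r ∈ Finset.range (L + 1),
        (-1) ^ (L - r) * q ^ ((L - r) * (L - r - 1) / 2) * qp q a (L + r) * β r /
          qp q q (L - r)
        = ∑ r ∈ range (L+1), ∑ s ∈ range (L+1),
            (if s ≤ r then T r s * α s else 0) := by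
          apply Finset.sum_congr rfl
          intro r hr
          rw [hBP r, Finset.mul_sum, Finset.sum_div]
          have hsub : ∑ s ∈ range (r+1),
              (-1) ^ (L - r) * q ^ ((L - r) * (L - r - 1) / 2) * qp q a (L + r) *
                (α s / (qp q q (r - s) * qp q (a * q) (r + s))) / qp q q (L - r)
              = ∑ s ∈ range (r+1), (if s ≤ r then T r s * α s else 0) := by
            apply Finset.sum_congr rfl
            intro s hs
            rw [if_pos (by simp at hs; omega), hT]
            simp only
            ring
          rw [hsub]
          apply Finset.sum_subset (Finset.range_subset_range.mpr (by simp at hr; omega))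
          intro s _ hs
          rw [if_neg (by simp at hs; omega)]
      _ = ∑ s ∈ range (L+1), (∑ r ∈ range (L+1), (if s ≤ r then T r s else 0)) * α s := by
          rw [Finset.sum_comm]
          apply Finset.sum_congr rfl
          intro s _
          rw [Finset.sum_mul]
          apply Finset.sum_congr rfl
          intro r _
          rw [ite_mul, zero_mul]
      _ = ∑ s ∈ range (L+1), (if s = L then (1-a)/(1 - a*q^(2*L)) else 0) * α s := by
          apply Finset.sum_congr rfl
          intro s hs
          rw [orth q a hq haq h1a L s (by simp at hs; omega) haL]
      _ = α L * ((1-a)/(1 - a*q^(2*L))) := by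
          have hconv : ∀ s, (if s = L then (1-a)/(1 - a*q^(2*L)) else 0) * α s
              = if s = L then (1-a)/(1 - a*q^(2*L)) * α s else 0 := by
            intro s
            rw [ite_mul, zero_mul]
          rw [Finset.sum_congr rfl (fun s _ => hconv s),
            Finset.sum_ite_eq' (range (L+1)) L (fun s => (1-a)/(1 - a*q^(2*L)) * α s),
            if_pos (Finset.self_mem_range_succ L)]
          ring
  rw [main]
  field_simp
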